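/- If the underlying precedence ≥_F on a finite set of function symbols is a total well-quasi-ordering, then the recursive path quasi-ordering ≥_RPQO derived from it is a well-quasi-ordering on ground terms. -/

import Mathlib

attribute [local instance] Classical.propDecidable

/-- Ground terms over a signature `F` with arity function `ar`. -/
inductive GTerm (F : Type) (ar : F → ℕ) : Type where
  | mk (f : F) (args : Fin (ar f) → GTerm F ar) : GTerm F ar

/-- The weight of a term: `w(f(t₁,…,tₙ)) = w(f) + Σ w(tᵢ)`. -/
def weightOf {F : Type} {ar : F → ℕ} (w : F → ℕ) : GTerm F ar → ℕ
  | .mk f args => w f + ∑ i : Fin (ar f), weightOf w (args i)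

/-- The derived multiset quasi-ordering of a relation `r`: `T ≥ U` iff `U = ∅`,
or some `t ∈ T` and `u ∈ U` are `≈`-equal (in both directions of `r`) and
`T − t ≥ U − u`, or some `t ∈ T` satisfies `T − t ≥ U` minus all elements
strictly below `t`. -/
inductive MulGE {α : Type} (r : α → α → Prop) : Multiset α → Multiset α → Prop where
  | empty (T : Multiset α) : MulGE r T 0
  | cancel {T U : Multiset α} (t u : α) (ht : t ∈ T) (hu : u ∈ U)
      (h1 : r t u) (h2 : r u t) (h : MulGE r (T.erase t) (U.erase u)) : MulGE r T U
  | dominate {T U : Multiset α} (t : α) (ht : t ∈ T)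
      (h : MulGE r (T.erase t) (U.filter (fun u => ¬ (r t u ∧ ¬ r u t)))) : MulGE r T U

/-- Size of a term (number of function symbol occurrences). -/
def tsize {F : Type} {ar : F → ℕ} : GTerm F ar → ℕ
  | .mk f args => 1 + ∑ i : Fin (ar f), tsize (args i)

/-- Strict part of the derived multiset ordering. -/
def MulGT {α : Type} (r : α → α → Prop) (T U : Multiset α) : Prop :=
  MulGE r T U ∧ ¬ MulGE r U T

/-- Strict part of the precedence. -/
def strictF {F : Type} (ge : F → F → Prop) (f g : F) : Prop := ge f g ∧ ¬ ge g f

/-- Equivalence part of the precedence. -/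
def equivF {F : Type} (ge : F → F → Prop) (f g : F) : Prop := ge f g ∧ ge g f

/-- The multiset of arguments of a term. -/
def argsM {F : Type} {ar : F → ℕ} {f : F} (args : Fin (ar f) → GTerm F ar) :
    Multiset (GTerm F ar) := (List.ofFn args : List (GTerm F ar))

/-- Fuelled recursive path quasi-ordering: `f(t₁,…,tₘ) ≥ g(u₁,…,uₙ)` iff
(1) `f >_F g` and `{f(ts)} >_mul {us}`, or (2) `g >_F f` and `{ts} ≥_mul {g(us)}`,
or (3) `f ≈_F g` and `{ts} ≥_mul {us}`.  Since each recursive comparison strictly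
decreases the total size of the compared pair, the fuel `tsize t + tsize u` used
in `RPQO` below makes this the exact recursive path quasi-ordering. -/
def RPQOf {F : Type} {ar : F → ℕ} (ge : F → F → Prop) :
    ℕ → GTerm F ar → GTerm F ar → Prop
  | 0, _, _ => False
  | n + 1, .mk f ts, .mk g us =>
      (strictF ge f g ∧ MulGT (RPQOf ge n) {GTerm.mk f ts} (argsM us)) ∨
      (strictF ge g f ∧ MulGE (RPQOf ge n) (argsM ts) {GTerm.mk g us}) ∨
      (equivF ge f g ∧ MulGE (RPQOf ge n) (argsM ts) (argsM us))

/-- The recursive path quasi-ordering derived from the precedence `ge`. -/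
def RPQO {F : Type} {ar : F → ℕ} (ge : F → F → Prop) (t u : GTerm F ar) : Prop :=
  RPQOf ge (tsize t + tsize u) t u

namespace MulGE

variable {α : Type} {r r' : α → α → Prop}

theorem zero_ge {V : Multiset α} (h : MulGE r 0 V) : V = 0 := by
  cases h with
  | empty => rfl
  | cancel t u ht => exact absurd ht (by simp)
  | dominate t ht => exact absurd ht (by simp)

theorem mono_left : ∀ {T U T' : Multiset α}, T ≤ T' → MulGE r T U → MulGE r T' U := by
  intro T U T' hle h
  induction h generalizing T' with
  | empty => exact .empty _
  | cancel t u ht hu h1 h2 h ih =>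
      exact .cancel t u (Multiset.mem_of_le hle ht) hu h1 h2 (ih (Multiset.erase_le_erase t hle))
  | dominate t ht h ih =>
      exact .dominate t (Multiset.mem_of_le hle ht) (ih (Multiset.erase_le_erase t hle))

theorem le_erase_of_not_mem {U' U : Multiset α} {u : α} (hle : U' ≤ U) (hu : u ∉ U') :
    U' ≤ U.erase u := by
  rw [Multiset.le_iff_count] at hle ⊢
  intro a
  rcases eq_or_ne a u with rfl | hne
  · simp [Multiset.count_eq_zero_of_notMem hu]
  · rw [Multiset.count_erase_of_ne hne]; exact hle a

theorem mono_right : ∀ {T U U' : Multiset α}, U' ≤ U → MulGE r T U → MulGE r T U' := by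
  intro T U U' hle h
  induction h generalizing U' with
  | empty => rw [Multiset.le_zero.mp hle]; exact .empty _
  | cancel t u ht hu h1 h2 h ih =>
      by_cases hmem : u ∈ U'
      · exact .cancel t u ht hmem h1 h2 (ih (Multiset.erase_le_erase u hle))
      · exact mono_left (Multiset.erase_le t _) (ih (le_erase_of_not_mem hle hmem))
  | dominate t ht h ih =>
      exact .dominate t ht (ih (Multiset.filter_le_filter _ hle))

theorem exists_ge : ∀ {T U : Multiset α}, MulGE r T U → ∀ u ∈ U, ∃ t ∈ T, r t u := by
  intro T U h
  induction h with
  | empty => intro u hu; simp at hu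
  | cancel t u' ht hu' h1 h2 h ih =>
      intro u hu
      by_cases he : u = u'
      · exact ⟨t, ht, he ▸ h1⟩
      · obtain ⟨t', ht', hr⟩ := ih u (Multiset.mem_erase_of_ne he |>.mpr hu)
        exact ⟨t', Multiset.mem_of_mem_erase ht', hr⟩
  | dominate t ht h ih =>
      intro u hu
      by_cases hp : r t u ∧ ¬ r u t
      · exact ⟨t, ht, hp.1⟩
      · obtain ⟨t', ht', hr⟩ := ih u (Multiset.mem_filter.mpr ⟨hu, hp⟩)
        exact ⟨t', Multiset.mem_of_mem_erase ht', hr⟩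

theorem singleton_iff {T : Multiset α} {u : α} : MulGE r T {u} ↔ ∃ t ∈ T, r t u := by
  constructor
  · intro h; exact exists_ge h u (Multiset.mem_singleton_self u)
  · rintro ⟨t, ht, hr⟩
    by_cases h2 : r u t
    · exact .cancel t u ht (Multiset.mem_singleton_self u) hr h2
        (by rw [Multiset.erase_singleton]; exact .empty _)
    · refine .dominate t ht ?_
      have : ({u} : Multiset α).filter (fun v => ¬ (r t v ∧ ¬ r v t)) = 0 := by
        rw [Multiset.filter_eq_nil]
        intro a ha
        rw [Multiset.mem_singleton] at ha
        subst ha; simp [hr, h2]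
      rw [this]; exact .empty _

theorem of_le_refl : ∀ {U T : Multiset α}, (∀ a ∈ U, r a a) → U ≤ T → MulGE r T U := by
  intro U
  induction U using Multiset.induction with
  | empty => intro T _ _; exact .empty _
  | cons a U ih =>
      intro T hrefl hle
      have ha : a ∈ T := Multiset.mem_of_le hle (Multiset.mem_cons_self a U)
      refine .cancel a a ha (Multiset.mem_cons_self a U) (hrefl a (Multiset.mem_cons_self a U))
        (hrefl a (Multiset.mem_cons_self a U)) ?_
      rw [Multiset.erase_cons_head]
      refine ih (fun b hb => hrefl b (Multiset.mem_cons_of_mem hb)) ?_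
      have := Multiset.erase_le_erase a hle
      rwa [Multiset.erase_cons_head] at this

theorem congr_rel : ∀ {T U : Multiset α},
    (∀ a ∈ T, ∀ b ∈ U, (r a b ↔ r' a b) ∧ (r b a ↔ r' b a)) →
    MulGE r T U → MulGE r' T U := by
  intro T U hcong h
  induction h with
  | empty => exact .empty _
  | @cancel T U t u ht hu h1 h2 h ih =>
      refine .cancel t u ht hu ((hcong t ht u hu).1.mp h1) ((hcong t ht u hu).2.mp h2)
        (ih fun a ha b hb => hcong a (Multiset.mem_of_mem_erase ha) b (Multiset.mem_of_mem_erase hb))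
  | @dominate T U t ht h ih =>
      refine .dominate t ht ?_
      have hfil : U.filter (fun u => ¬ (r' t u ∧ ¬ r' u t)) =
          U.filter (fun u => ¬ (r t u ∧ ¬ r u t)) := by
        apply Multiset.filter_congr
        intro b hb
        have := hcong t ht b hb
        rw [this.1, this.2]
      rw [hfil]
      exact ih fun a ha b hb =>
        hcong a (Multiset.mem_of_mem_erase ha) b (Multiset.mem_of_le (Multiset.filter_le _ _) hb)

theorem congr_rel_iff {T U : Multiset α}
    (hcong : ∀ a ∈ T, ∀ b ∈ U, (r a b ↔ r' a b) ∧ (r b a ↔ r' b a)) :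
    MulGE r T U ↔ MulGE r' T U :=
  ⟨congr_rel hcong, congr_rel (fun a ha b hb => ⟨(hcong a ha b hb).1.symm, (hcong a ha b hb).2.symm⟩)⟩

theorem split : ∀ {U V : Multiset α}, MulGE r U V → ∀ U₁ U₂, U = U₁ + U₂ →
    ∃ V₁ V₂, V = V₁ + V₂ ∧ MulGE r U₁ V₁ ∧ MulGE r U₂ V₂ := by
  intro U V h
  induction h with
  | empty => intro U₁ U₂ _; exact ⟨0, 0, by simp, .empty _, .empty _⟩
  | @cancel U V t u ht hu h1 h2 h ih =>
      intro U₁ U₂ hU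
      subst hU
      rcases Multiset.mem_add.mp ht with ht1 | ht2
      · obtain ⟨W₁, W₂, hW, hW1, hW2⟩ := ih (U₁.erase t) U₂ (Multiset.erase_add_left_pos _ ht1)
        refine ⟨u ::ₘ W₁, W₂, ?_, ?_, hW2⟩
        · rw [Multiset.cons_add, ← hW, Multiset.cons_erase hu]
        · exact .cancel t u ht1 (Multiset.mem_cons_self u W₁) h1 h2
            (by rwa [Multiset.erase_cons_head])
      · obtain ⟨W₁, W₂, hW, hW1, hW2⟩ := ih U₁ (U₂.erase t) (Multiset.erase_add_right_pos _ ht2)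
        refine ⟨W₁, u ::ₘ W₂, ?_, hW1, ?_⟩
        · rw [Multiset.add_cons, ← hW, Multiset.cons_erase hu]
        · exact .cancel t u ht2 (Multiset.mem_cons_self u W₂) h1 h2
            (by rwa [Multiset.erase_cons_head])
  | @dominate U V t ht h ih =>
      intro U₁ U₂ hU
      subst hU
      rcases Multiset.mem_add.mp ht with ht1 | ht2
      · obtain ⟨W₁, W₂, hW, hW1, hW2⟩ := ih (U₁.erase t) U₂ (Multiset.erase_add_left_pos _ ht1)
        have hW2le : W₂ ≤ Multiset.filter (fun u => ¬ (r t u ∧ ¬ r u t)) _ := hW ▸ Multiset.le_add_left _ _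
        refine ⟨V - W₂, W₂, (tsub_add_cancel_of_le (le_trans hW2le (Multiset.filter_le _ _))).symm,
          ?_, hW2⟩
        refine .dominate t ht1 ?_
        have : Multiset.filter (fun u => ¬ (r t u ∧ ¬ r u t)) (V - W₂) =
            Multiset.filter (fun u => ¬ (r t u ∧ ¬ r u t)) V - W₂ := by
          rw [Multiset.filter_sub]
          congr 1
          refine Multiset.filter_eq_self.mpr ?_
          intro a ha
          have hmf := Multiset.mem_of_le hW2le ha
          exact Multiset.of_mem_filter (p := fun u => ¬(r t u ∧ ¬ r u t)) hmf
        rw [this, hW]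
        simpa using hW1
      · obtain ⟨W₁, W₂, hW, hW1, hW2⟩ := ih U₁ (U₂.erase t) (Multiset.erase_add_right_pos _ ht2)
        have hW1le : W₁ ≤ Multiset.filter (fun u => ¬ (r t u ∧ ¬ r u t)) _ := hW ▸ Multiset.le_add_right _ _
        refine ⟨W₁, V - W₁, ?_, hW1, ?_⟩
        · rw [add_comm]
          exact (tsub_add_cancel_of_le (le_trans hW1le (Multiset.filter_le _ _))).symm
        refine .dominate t ht2 ?_
        have : Multiset.filter (fun u => ¬ (r t u ∧ ¬ r u t)) (V - W₁) =
            Multiset.filter (fun u => ¬ (r t u ∧ ¬ r u t)) V - W₁ := by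
          rw [Multiset.filter_sub]
          congr 1
          refine Multiset.filter_eq_self.mpr ?_
          intro a ha
          have hmf := Multiset.mem_of_le hW1le ha
          exact Multiset.of_mem_filter (p := fun u => ¬(r t u ∧ ¬ r u t)) hmf
        rw [this, hW]
        simpa [add_comm] using hW2

theorem single_left {u : α} {V : Multiset α} (h : MulGE r {u} V) :
    V = 0 ∨ (∃ v, V = {v} ∧ r u v ∧ r v u) ∨ (∀ v ∈ V, r u v ∧ ¬ r v u) := by
  cases h with
  | empty => exact Or.inl rfl
  | cancel t v ht hv h1 h2 h =>
      rw [Multiset.mem_singleton] at ht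
      subst ht
      rw [Multiset.erase_singleton] at h
      have hV := zero_ge h
      refine Or.inr (Or.inl ⟨v, ?_, h1, h2⟩)
      rw [← Multiset.cons_erase hv, hV]
      rfl
  | dominate t ht h =>
      rw [Multiset.mem_singleton] at ht
      subst ht
      rw [Multiset.erase_singleton] at h
      have hV := zero_ge h
      rw [Multiset.filter_eq_nil] at hV
      refine Or.inr (Or.inr fun v hv => ?_)
      exact not_not.mp (hV v hv)

theorem trans_aux : ∀ {T U : Multiset α}, MulGE r T U → ∀ {V : Multiset α},
    (∀ a ∈ T, ∀ b ∈ U, ∀ c ∈ V,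
      (r a b → r b c → r a c) ∧ (r c b → r b a → r c a) ∧
      (r c a → r a b → r c b) ∧ (r b c → r c a → r b a)) →
    MulGE r U V → MulGE r T V := by
  intro T U h1
  induction h1 with
  | empty =>
      intro V _ h2
      rw [zero_ge h2]
      exact .empty _
  | @cancel T U t u ht hu hr1 hr2 h ih =>
      intro V htr h2
      obtain ⟨V₁, V₂, hV, hV1, hV2⟩ := split h2 {u} (U.erase u)
        (by rw [Multiset.singleton_add, Multiset.cons_erase hu])
      have hV2le : V₂ ≤ V := hV ▸ Multiset.le_add_left _ _
      have hTV₂ : MulGE r (T.erase t) V₂ := by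
        refine ih ?_ hV2
        intro a ha b hb c hc
        exact htr a (Multiset.mem_of_mem_erase ha) b (Multiset.mem_of_mem_erase hb) c
          (Multiset.mem_of_le hV2le hc)
      rcases single_left hV1 with h0 | ⟨v, hv, huv, hvu⟩ | hdom
      · subst h0
        rw [hV, zero_add]
        exact mono_left (Multiset.erase_le t T) hTV₂
      · subst hv
        have hvV : v ∈ V := by rw [hV]; simp
        have h6 := htr t ht u hu v hvV
        refine .cancel t v ht hvV (h6.1 hr1 huv) ((h6.2.1) hvu hr2) ?_
        have : V.erase v = V₂ := by
          rw [hV, Multiset.singleton_add, Multiset.erase_cons_head]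
        rw [this]
        exact hTV₂
      · refine .dominate t ht ?_
        have hfil : V.filter (fun u' => ¬ (r t u' ∧ ¬ r u' t)) ≤ V₂ := by
          rw [hV, Multiset.filter_add]
          have : V₁.filter (fun u' => ¬ (r t u' ∧ ¬ r u' t)) = 0 := by
            rw [Multiset.filter_eq_nil]
            intro v hvV₁
            have hvV : v ∈ V := by rw [hV]; exact Multiset.mem_add.mpr (Or.inl hvV₁)
            have h6 := htr t ht u hu v hvV
            have huv := hdom v hvV₁
            intro hcon
            refine hcon ⟨h6.1 hr1 huv.1, fun hvt => huv.2 (h6.2.2.1 hvt hr1)⟩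
          rw [this, zero_add]
          exact Multiset.filter_le _ _
        exact mono_right hfil hTV₂
  | @dominate T U t ht h ih =>
      intro V htr h2
      obtain ⟨V₁, V₂, hV, hV1, hV2⟩ := split h2
        (U.filter (fun u' => ¬ (r t u' ∧ ¬ r u' t)))
        (U.filter (fun u' => ¬ ¬ (r t u' ∧ ¬ r u' t)))
        (by rw [Multiset.filter_add_not])
      have hV1le : V₁ ≤ V := hV ▸ Multiset.le_add_right _ _
      have hTV₁ : MulGE r (T.erase t) V₁ := by
        refine ih ?_ hV1
        intro a ha b hb c hc
        exact htr a (Multiset.mem_of_mem_erase ha) b (Multiset.mem_of_le (Multiset.filter_le _ _) hb)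
          c (Multiset.mem_of_le hV1le hc)
      have hstrict : ∀ v ∈ V₂, r t v ∧ ¬ r v t := by
        intro v hv
        obtain ⟨u', hu', hru'⟩ := exists_ge hV2 v hv
        have hu'U : u' ∈ U := Multiset.mem_of_le (Multiset.filter_le _ _) hu'
        have hp : r t u' ∧ ¬ r u' t := by
          have := Multiset.of_mem_filter (p := fun u' => ¬ ¬ (r t u' ∧ ¬ r u' t)) hu'
          exact not_not.mp this
        have hvV : v ∈ V := hV ▸ Multiset.mem_add.mpr (Or.inr hv)
        have h6 := htr t ht u' hu'U v hvV
        refine ⟨h6.1 hp.1 hru', fun hvt => hp.2 (h6.2.2.2 hru' hvt)⟩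
      refine .dominate t ht ?_
      have hfil : V.filter (fun u' => ¬ (r t u' ∧ ¬ r u' t)) ≤ V₁ := by
        rw [hV, Multiset.filter_add]
        have : V₂.filter (fun u' => ¬ (r t u' ∧ ¬ r u' t)) = 0 := by
          rw [Multiset.filter_eq_nil]
          intro v hv
          exact not_not.mpr (hstrict v hv)
        rw [this, add_zero]
        exact Multiset.filter_le _ _
      exact mono_right hfil hTV₁

theorem of_sublistForall₂ {l₁ l₂ : List α}
    (h : List.SublistForall₂ (fun a c => r c a) l₁ l₂) : MulGE r (↑l₂) (↑l₁) := by
  induction h with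
  | nil => exact .empty _
  | @cons a₁ a₂ t₁ t₂ hr h ih =>
      show MulGE r (a₂ ::ₘ (↑t₂ : Multiset α)) (a₁ ::ₘ (↑t₁ : Multiset α))
      by_cases hba : r a₁ a₂
      · exact .cancel a₂ a₁ (Multiset.mem_cons_self _ _) (Multiset.mem_cons_self _ _) hr hba
          (by rw [Multiset.erase_cons_head, Multiset.erase_cons_head]; exact ih)
      · refine .dominate a₂ (Multiset.mem_cons_self _ _) ?_
        rw [Multiset.erase_cons_head]
        refine mono_right ?_ ih
        have : (a₁ ::ₘ (↑t₁ : Multiset α)).filter (fun u' => ¬ (r a₂ u' ∧ ¬ r u' a₂)) ≤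
            (a₁ ::ₘ (↑t₁ : Multiset α)).erase a₁ := by
          apply le_erase_of_not_mem (Multiset.filter_le _ _)
          intro hmem
          exact (Multiset.of_mem_filter (p := fun u' => ¬ (r a₂ u' ∧ ¬ r u' a₂)) hmem) ⟨hr, hba⟩
        rwa [Multiset.erase_cons_head] at this
  | @cons_right a t₁ t₂ h ih =>
      show MulGE r (a ::ₘ (↑t₂ : Multiset α)) (↑t₁)
      exact mono_left (Multiset.le_cons_self _ _) ih

end MulGE

section RPQOLemmas

variable {F : Type} {ar : F → ℕ}

/-- Head symbol of a term. -/
def hd : GTerm F ar → F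
  | .mk f _ => f

/-- Argument multiset of a term. -/
def argsOf : GTerm F ar → Multiset (GTerm F ar)
  | .mk _ ts => argsM ts

/-- Argument list of a term. -/
def argsL : GTerm F ar → List (GTerm F ar)
  | .mk _ ts => List.ofFn ts

theorem argsOf_eq_coe (t : GTerm F ar) : argsOf t = (argsL t : Multiset (GTerm F ar)) := by
  cases t; rfl

theorem tsize_pos (t : GTerm F ar) : 1 ≤ tsize t := by
  cases t with
  | mk f ts => rw [tsize]; omega

theorem tsize_lt_of_mem_argsOf {x t : GTerm F ar} (h : x ∈ argsOf t) : tsize x < tsize t := by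
  cases t with
  | mk f ts =>
      have hx : x ∈ List.ofFn ts := h
      rw [List.mem_ofFn] at hx
      obtain ⟨i, rfl⟩ := hx
      have : tsize (ts i) ≤ ∑ j : Fin (ar f), tsize (ts j) :=
        Finset.single_le_sum (f := fun j => tsize (ts j)) (fun j _ => Nat.zero_le _) (Finset.mem_univ i)
      rw [tsize]; omega

variable (ge : F → F → Prop)

theorem RPQOf_congr : ∀ (k : ℕ) (t u : GTerm F ar), tsize t + tsize u ≤ k →
    ∀ n m, tsize t + tsize u ≤ n → tsize t + tsize u ≤ m →
    (RPQOf ge n t u ↔ RPQOf ge m t u) := by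
  intro k
  induction k with
  | zero =>
      intro t u h
      have := tsize_pos t; have := tsize_pos u
      omega
  | succ k ih =>
      rintro ⟨f, ts⟩ ⟨g, us⟩ hk n m hn hm
      have h1 : 1 ≤ tsize (GTerm.mk f ts) := tsize_pos _
      have h2 : 1 ≤ tsize (GTerm.mk g us) := tsize_pos _
      obtain ⟨n', rfl⟩ : ∃ n', n = n' + 1 := ⟨n - 1, by omega⟩
      obtain ⟨m', rfl⟩ : ∃ m', m = m' + 1 := ⟨m - 1, by omega⟩
      have hpair : ∀ a b : GTerm F ar,
          tsize a + tsize b + 1 ≤ tsize (GTerm.mk f ts) + tsize (GTerm.mk g us) →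
          ((RPQOf ge n' a b ↔ RPQOf ge m' a b) ∧ (RPQOf ge n' b a ↔ RPQOf ge m' b a)) := by
        intro a b hab
        exact ⟨ih a b (by omega) n' m' (by omega) (by omega),
               ih b a (by omega) n' m' (by omega) (by omega)⟩
      show RPQOf ge (n' + 1) _ _ ↔ RPQOf ge (m' + 1) _ _
      simp only [RPQOf]
      have hsz_t : ∀ b ∈ argsM us, tsize b < tsize (GTerm.mk g us) := fun b hb =>
        tsize_lt_of_mem_argsOf (t := GTerm.mk g us) hb
      have hsz_s : ∀ a ∈ argsM ts, tsize a < tsize (GTerm.mk f ts) := fun a ha =>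
        tsize_lt_of_mem_argsOf (t := GTerm.mk f ts) ha
      apply or_congr
      · apply and_congr_right
        intro _
        unfold MulGT
        apply and_congr
        · apply MulGE.congr_rel_iff
          intro a ha b hb
          rw [Multiset.mem_singleton] at ha
          subst ha
          exact hpair _ b (by have := hsz_t b hb; omega)
        · apply not_congr
          apply MulGE.congr_rel_iff
          intro a ha b hb
          rw [Multiset.mem_singleton] at hb
          subst hb
          exact ⟨(hpair _ a (by have := hsz_t a ha; omega)).2,
                 (hpair _ a (by have := hsz_t a ha; omega)).1⟩
      apply or_congr
      · apply and_congr_right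
        intro _
        apply MulGE.congr_rel_iff
        intro a ha b hb
        rw [Multiset.mem_singleton] at hb
        subst hb
        exact ⟨(hpair a _ (by have := hsz_s a ha; omega)).1,
               (hpair a _ (by have := hsz_s a ha; omega)).2⟩
      · apply and_congr_right
        intro _
        apply MulGE.congr_rel_iff
        intro a ha b hb
        exact hpair a b (by have := hsz_s a ha; have := hsz_t b hb; omega)

theorem RPQOf_iff_RPQO {n : ℕ} {t u : GTerm F ar} (h : tsize t + tsize u ≤ n) :
    RPQOf ge n t u ↔ RPQO ge t u :=
  RPQOf_congr ge (tsize t + tsize u) t u le_rfl n (tsize t + tsize u) h le_rfl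

theorem RPQO_iff (f : F) (ts : Fin (ar f) → GTerm F ar) (g : F)
    (us : Fin (ar g) → GTerm F ar) :
    RPQO ge (GTerm.mk f ts) (GTerm.mk g us) ↔
      (strictF ge f g ∧ MulGT (RPQO ge) {GTerm.mk f ts} (argsM us)) ∨
      (strictF ge g f ∧ MulGE (RPQO ge) (argsM ts) {GTerm.mk g us}) ∨
      (equivF ge f g ∧ MulGE (RPQO ge) (argsM ts) (argsM us)) := by
  have h1 : 1 ≤ tsize (GTerm.mk f ts) := tsize_pos _
  have h2 : 1 ≤ tsize (GTerm.mk g us) := tsize_pos _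
  set N := tsize (GTerm.mk f ts) + tsize (GTerm.mk g us) with hN
  have hNeq : N = (N - 1) + 1 := by omega
  have hsz_t : ∀ b ∈ argsM us, tsize b < tsize (GTerm.mk g us) := fun b hb =>
    tsize_lt_of_mem_argsOf (t := GTerm.mk g us) hb
  have hsz_s : ∀ a ∈ argsM ts, tsize a < tsize (GTerm.mk f ts) := fun a ha =>
    tsize_lt_of_mem_argsOf (t := GTerm.mk f ts) ha
  have hpair : ∀ a b : GTerm F ar, tsize a + tsize b + 1 ≤ N →
      ((RPQOf ge (N - 1) a b ↔ RPQO ge a b) ∧ (RPQOf ge (N - 1) b a ↔ RPQO ge b a)) := by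
    intro a b hab
    exact ⟨RPQOf_iff_RPQO ge (by omega), RPQOf_iff_RPQO ge (by omega)⟩
  show RPQOf ge N _ _ ↔ _
  rw [hNeq]
  show RPQOf ge ((N - 1) + 1) _ _ ↔ _
  simp only [RPQOf]
  apply or_congr
  · apply and_congr_right
    intro _
    unfold MulGT
    apply and_congr
    · apply MulGE.congr_rel_iff
      intro a ha b hb
      rw [Multiset.mem_singleton] at ha
      subst ha
      exact hpair _ b (by have := hsz_t b hb; omega)
    · apply not_congr
      apply MulGE.congr_rel_iff
      intro a ha b hb
      rw [Multiset.mem_singleton] at hb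
      subst hb
      exact ⟨(hpair _ a (by have := hsz_t a ha; omega)).2,
             (hpair _ a (by have := hsz_t a ha; omega)).1⟩
  apply or_congr
  · apply and_congr_right
    intro _
    apply MulGE.congr_rel_iff
    intro a ha b hb
    rw [Multiset.mem_singleton] at hb
    subst hb
    exact ⟨(hpair a _ (by have := hsz_s a ha; omega)).1,
           (hpair a _ (by have := hsz_s a ha; omega)).2⟩
  · apply and_congr_right
    intro _
    apply MulGE.congr_rel_iff
    intro a ha b hb
    exact hpair a b (by have := hsz_s a ha; have := hsz_t b hb; omega)

theorem RPQO_AC (htotal : ∀ f g, ge f g ∨ ge g f) :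
    ∀ (k : ℕ) (t u : GTerm F ar), tsize t + tsize u ≤ k →
    ((RPQO ge t u → ∀ v ∈ argsOf u, RPQO ge t v ∧ ¬ RPQO ge v t) ∧
     ((∃ w ∈ argsOf t, RPQO ge w u) → RPQO ge t u)) := by
  intro k
  induction k with
  | zero =>
      intro t u h
      have := tsize_pos t; have := tsize_pos u
      exact absurd h (by omega)
  | succ k ih =>
      rintro ⟨f, ts⟩ ⟨g, us⟩ hk
      set t := GTerm.mk f ts with hT
      set u := GTerm.mk g us with hU
      have hsz_t : ∀ b ∈ argsM us, tsize b < tsize u := fun b hb =>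
        tsize_lt_of_mem_argsOf (t := u) hb
      have hsz_s : ∀ a ∈ argsM ts, tsize a < tsize t := fun a ha =>
        tsize_lt_of_mem_argsOf (t := t) ha
      constructor
      · intro h v hv
        have hv' : v ∈ argsM us := hv
        have hvsz := hsz_t v hv'
        rw [RPQO_iff] at h
        rcases h with ⟨hfg, hMGT⟩ | ⟨hgf, hMGE⟩ | ⟨hfg, hMGE⟩
        · constructor
          · have := MulGE.mono_right (Multiset.singleton_le.mpr hv') hMGT.1
            obtain ⟨x, hx, hxv⟩ := MulGE.singleton_iff.mp this
            rw [Multiset.mem_singleton] at hx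
            subst hx
            exact hxv
          · intro hvt
            exact hMGT.2 (MulGE.singleton_iff.mpr ⟨v, hv', hvt⟩)
        · obtain ⟨w, hw, hwu⟩ := MulGE.singleton_iff.mp hMGE
          have hwsz := hsz_s w hw
          have hAw := (ih w u (by omega)).1 hwu
          constructor
          · exact (ih t v (by omega)).2 ⟨w, hw, (hAw v hv).1⟩
          · intro hvt
            have hAv := (ih v t (by omega)).1 hvt
            exact (hAv w hw).2 (hAw v hv).1
        · obtain ⟨w, hw, hwv⟩ := MulGE.exists_ge hMGE v hv'
          have hwsz := hsz_s w hw
          constructor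
          · exact (ih t v (by omega)).2 ⟨w, hw, hwv⟩
          · intro hvt
            have hAv := (ih v t (by omega)).1 hvt
            exact (hAv w hw).2 hwv
      · rintro ⟨w, hw, hwu⟩
        have hw' : w ∈ argsM ts := hw
        have hwsz := hsz_s w hw'
        have hAw := (ih w u (by omega)).1 hwu
        have hstrict : ∀ v ∈ argsM us, RPQO ge t v ∧ ¬ RPQO ge v t := by
          intro v hv
          have hvsz := hsz_t v hv
          have hwv := hAw v hv
          constructor
          · exact (ih t v (by omega)).2 ⟨w, hw, hwv.1⟩
          · intro hvt
            have hAv := (ih v t (by omega)).1 hvt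
            exact (hAv w hw).2 hwv.1
        rw [RPQO_iff]
        by_cases h1 : ge f g <;> by_cases h2 : ge g f
        · right; right
          refine ⟨⟨h1, h2⟩, ?_⟩
          refine MulGE.dominate w hw' ?_
          have : (argsM us).filter (fun v => ¬ (RPQO ge w v ∧ ¬ RPQO ge v w)) = 0 := by
            rw [Multiset.filter_eq_nil]
            intro v hv
            exact not_not.mpr (hAw v hv)
          rw [this]
          exact .empty _
        · left
          refine ⟨⟨h1, h2⟩, ?_, ?_⟩
          · refine MulGE.dominate t (Multiset.mem_singleton_self t) ?_
            have : (argsM us).filter (fun v => ¬ (RPQO ge t v ∧ ¬ RPQO ge v t)) = 0 := by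
              rw [Multiset.filter_eq_nil]
              intro v hv
              exact not_not.mpr (hstrict v hv)
            rw [this]
            exact .empty _
          · intro hcon
            obtain ⟨v, hv, hvt⟩ := MulGE.singleton_iff.mp hcon
            exact (hstrict v hv).2 hvt
        · right; left
          exact ⟨⟨h2, h1⟩, MulGE.singleton_iff.mpr ⟨w, hw', hwu⟩⟩
        · rcases htotal f g with h | h
          · exact absurd h h1
          · exact absurd h h2

theorem RPQO_refl (hrefl : ∀ f, ge f f) (t : GTerm F ar) : RPQO ge t t := by
  have : ∀ (k : ℕ) (t : GTerm F ar), tsize t ≤ k → RPQO ge t t := by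
    intro k
    induction k with
    | zero =>
        intro t h
        exact absurd h (by have := tsize_pos t; omega)
    | succ k ih =>
        rintro ⟨f, ts⟩ hk
        rw [RPQO_iff]
        right; right
        refine ⟨⟨hrefl f, hrefl f⟩, MulGE.of_le_refl ?_ le_rfl⟩
        intro a ha
        have := tsize_lt_of_mem_argsOf (t := GTerm.mk f ts) ha
        exact ih a (by omega)
  exact this (tsize t) t le_rfl

theorem RPQO_A (htotal : ∀ f g, ge f g ∨ ge g f) {t u : GTerm F ar} (h : RPQO ge t u) :
    ∀ v ∈ argsOf u, RPQO ge t v ∧ ¬ RPQO ge v t :=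
  (RPQO_AC ge htotal (tsize t + tsize u) t u le_rfl).1 h

theorem RPQO_C (htotal : ∀ f g, ge f g ∨ ge g f) {t u : GTerm F ar}
    (h : ∃ w ∈ argsOf t, RPQO ge w u) : RPQO ge t u :=
  (RPQO_AC ge htotal (tsize t + tsize u) t u le_rfl).2 h

theorem RPQO_subterm (hrefl : ∀ f, ge f f) (htotal : ∀ f g, ge f g ∨ ge g f)
    {t v : GTerm F ar} (hv : v ∈ argsOf t) : RPQO ge t v :=
  (RPQO_A ge htotal (RPQO_refl ge hrefl t) v hv).1

theorem RPQO_trans (htrans : ∀ f g h, ge f g → ge g h → ge f h)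
    (htotal : ∀ f g, ge f g ∨ ge g f) :
    ∀ (k : ℕ) (s t u : GTerm F ar), tsize s + tsize t + tsize u ≤ k →
    RPQO ge s t → RPQO ge t u → RPQO ge s u := by
  intro k
  induction k with
  | zero =>
      intro s t u h
      have := tsize_pos s; have := tsize_pos t; have := tsize_pos u
      exact absurd h (by omega)
  | succ k ih =>
      rintro ⟨f, ss⟩ ⟨g, ts⟩ ⟨h, us⟩ hk h1 h2
      set s := GTerm.mk f ss with hS
      set t := GTerm.mk g ts with hT
      set u := GTerm.mk h us with hU
      have hsz_s : ∀ a ∈ argsM ss, tsize a < tsize s := fun a ha =>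
        tsize_lt_of_mem_argsOf (t := s) ha
      have hsz_t : ∀ a ∈ argsM ts, tsize a < tsize t := fun a ha =>
        tsize_lt_of_mem_argsOf (t := t) ha
      have hsz_u : ∀ a ∈ argsM us, tsize a < tsize u := fun a ha =>
        tsize_lt_of_mem_argsOf (t := u) ha
      have hA2 := RPQO_A ge htotal h2
      -- uniform construction when f is strictly bigger than h
      have huni : strictF ge f h → RPQO ge s u := by
        intro hfh
        have hstrict : ∀ v ∈ argsM us, RPQO ge s v ∧ ¬ RPQO ge v s := by
          intro v hv
          have hvsz := hsz_u v hv
          have htv := hA2 v hv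
          constructor
          · exact ih s t v (by omega) h1 htv.1
          · intro hvs
            exact htv.2 (ih v s t (by omega) hvs h1)
        rw [RPQO_iff]
        left
        refine ⟨hfh, ?_, ?_⟩
        · refine MulGE.dominate s (Multiset.mem_singleton_self s) ?_
          have : (argsM us).filter (fun v => ¬ (RPQO ge s v ∧ ¬ RPQO ge v s)) = 0 := by
            rw [Multiset.filter_eq_nil]
            intro v hv
            exact not_not.mpr (hstrict v hv)
          rw [this]
          exact .empty _
        · intro hcon
          obtain ⟨v, hv, hvs⟩ := MulGE.singleton_iff.mp hcon
          exact (hstrict v hv).2 hvs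
      rw [RPQO_iff] at h1 h2
      rcases h1 with ⟨hfg, hM1⟩ | ⟨hgf, hM1⟩ | ⟨hfg, hM1⟩
      · -- case 1a : f > g
        rcases h2 with ⟨hgh, hM2⟩ | ⟨hhg, hM2⟩ | ⟨hgh, hM2⟩
        · exact huni ⟨htrans f g h hfg.1 hgh.1,
            fun hhf => hgh.2 (htrans h f g hhf hfg.1)⟩
        · -- h > g, args t ≥ {u}
          obtain ⟨w, hw, hwu⟩ := MulGE.singleton_iff.mp hM2
          have hwsz := hsz_t w hw
          have hsw : RPQO ge s w := by
            have := MulGE.mono_right (Multiset.singleton_le.mpr hw) hM1.1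
            obtain ⟨x, hx, hxw⟩ := MulGE.singleton_iff.mp this
            rw [Multiset.mem_singleton] at hx
            subst hx
            exact hxw
          exact ih s w u (by omega) hsw hwu
        · exact huni ⟨htrans f g h hfg.1 hgh.1,
            fun hhf => hfg.2 (htrans g h f hgh.1 hhf)⟩
      · -- case 1b : g > f, args s ≥ {t}
        obtain ⟨w, hw, hwt⟩ := MulGE.singleton_iff.mp hM1
        have hwsz := hsz_s w hw
        have h2' : RPQO ge t u := by rw [RPQO_iff]; exact h2
        exact RPQO_C ge htotal ⟨w, hw, ih w t u (by omega) hwt h2'⟩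
      · -- case 1c : f ≈ g
        rcases h2 with ⟨hgh, hM2⟩ | ⟨hhg, hM2⟩ | ⟨hgh, hM2⟩
        · exact huni ⟨htrans f g h hfg.1 hgh.1,
            fun hhf => hgh.2 (htrans h f g hhf hfg.1)⟩
        · obtain ⟨w, hw, hwu⟩ := MulGE.singleton_iff.mp hM2
          have hwsz := hsz_t w hw
          obtain ⟨a, ha, haw⟩ := MulGE.exists_ge hM1 w hw
          have hasz := hsz_s a ha
          have hau : RPQO ge a u := ih a w u (by omega) haw hwu
          exact RPQO_C ge htotal ⟨a, ha, hau⟩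
        · -- both equivalences
          rw [RPQO_iff]
          right; right
          refine ⟨⟨htrans f g h hfg.1 hgh.1, htrans h g f hgh.2 hfg.2⟩, ?_⟩
          refine MulGE.trans_aux hM1 ?_ hM2
          intro a ha b hb c hc
          have hasz := hsz_s a ha
          have hbsz := hsz_t b hb
          have hcsz := hsz_u c hc
          exact ⟨fun x y => ih a b c (by omega) x y,
                 fun x y => ih c b a (by omega) x y,
                 fun x y => ih c a b (by omega) x y,
                 fun x y => ih b c a (by omega) x y⟩

theorem RPQO_trans' (htrans : ∀ f g h, ge f g → ge g h → ge f h)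
    (htotal : ∀ f g, ge f g ∨ ge g f) {s t u : GTerm F ar}
    (h1 : RPQO ge s t) (h2 : RPQO ge t u) : RPQO ge s u :=
  RPQO_trans ge htrans htotal (tsize s + tsize t + tsize u) s t u le_rfl h1 h2

theorem RPQO_of_hd_eq {t u : GTerm F ar} (hrefl : ∀ f, ge f f) (hhd : hd t = hd u)
    (hM : MulGE (RPQO ge) (argsOf t) (argsOf u)) : RPQO ge t u := by
  obtain ⟨f, ts⟩ := t
  obtain ⟨g, us⟩ := u
  have hfg : f = g := hhd
  subst hfg
  rw [RPQO_iff]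
  right; right
  exact ⟨⟨hrefl f, hrefl f⟩, hM⟩

end RPQOLemmas

/-- Minimal bad sequence construction. -/
theorem exists_min_bad {α : Type} (μ : α → ℕ) (R : α → α → Prop) (s₀ : ℕ → α)
    (h₀ : ∀ i j, i < j → ¬ R (s₀ j) (s₀ i)) :
    ∃ b : ℕ → α, (∀ i j, i < j → ¬ R (b j) (b i)) ∧
      ∀ (k : ℕ) (s : ℕ → α), (∀ i j, i < j → ¬ R (s j) (s i)) →
        (∀ i, i < k → s i = b i) → μ (b k) ≤ μ (s k) := by
  set Bad : (ℕ → α) → Prop := fun s => ∀ i j, i < j → ¬ R (s j) (s i) with hBad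
  have hbase : ∃ q : {s : ℕ → α // Bad s}, ∀ s', Bad s' → μ (q.1 0) ≤ μ (s' 0) := by
    have hne : ∃ m : ℕ, ∃ s, Bad s ∧ μ (s 0) = m := ⟨μ (s₀ 0), s₀, h₀, rfl⟩
    obtain ⟨s, hs, hm⟩ := Nat.find_spec hne
    refine ⟨⟨s, hs⟩, fun s' hs' => ?_⟩
    rw [hm]
    exact Nat.find_min' hne ⟨s', hs', rfl⟩
  have hstep : ∀ (p : {s : ℕ → α // Bad s}) (k : ℕ), ∃ q : {s : ℕ → α // Bad s},
      (∀ i, i ≤ k → q.1 i = p.1 i) ∧ ∀ s', Bad s' → (∀ i, i ≤ k → s' i = p.1 i) →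
        μ (q.1 (k + 1)) ≤ μ (s' (k + 1)) := by
    intro p k
    have hne : ∃ m : ℕ, ∃ s, (Bad s ∧ ∀ i, i ≤ k → s i = p.1 i) ∧ μ (s (k + 1)) = m :=
      ⟨μ (p.1 (k + 1)), p.1, ⟨p.2, fun _ _ => rfl⟩, rfl⟩
    obtain ⟨s, ⟨hsbad, hsag⟩, hm⟩ := Nat.find_spec hne
    refine ⟨⟨s, hsbad⟩, hsag, fun s' hb hag => ?_⟩
    rw [hm]
    exact Nat.find_min' hne ⟨s', ⟨hb, hag⟩, rfl⟩
  choose step hstep1 hstep2 using hstep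
  obtain ⟨q₀, hq₀⟩ := hbase
  let g : ℕ → {s : ℕ → α // Bad s} := fun k => Nat.rec q₀ (fun k q => step q k) k
  have hgs : ∀ k, g (k + 1) = step (g k) k := fun k => rfl
  have hagree : ∀ j k, k ≤ j → ∀ i, i ≤ k → (g j).1 i = (g k).1 i := by
    intro j
    induction j with
    | zero =>
        intro k hk i hi
        have : k = 0 := Nat.le_zero.mp hk
        subst this; rfl
    | succ j ihj =>
        intro k hk i hi
        rcases Nat.lt_or_ge k (j + 1) with hlt | hge
        · have hk' : k ≤ j := by omega
          have h1 : (g (j + 1)).1 i = (g j).1 i := by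
            rw [hgs j]
            exact hstep1 (g j) j i (by omega)
          rw [h1]
          exact ihj k hk' i hi
        · have : k = j + 1 := by omega
          subst this; rfl
  refine ⟨fun k => (g k).1 k, ?_, ?_⟩
  · intro i j hij
    have heq : (g j).1 i = (g i).1 i := hagree j i (le_of_lt hij) i le_rfl
    show ¬ R ((g j).1 j) ((g i).1 i)
    rw [← heq]
    exact (g j).2 i j hij
  · intro k s hsbad hag
    cases k with
    | zero => exact hq₀ s hsbad
    | succ k =>
        have hag' : ∀ i, i ≤ k → s i = (g k).1 i := by
          intro i hi
          rw [hag i (by omega)]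
          exact (hagree k i hi i le_rfl).symm
        have := hstep2 (g k) k s hsbad hag'
        show μ ((g (k + 1)).1 (k + 1)) ≤ μ (s (k + 1))
        rw [hgs k]
        exact this

/-- If the precedence on a finite set of function symbols is a total
well-quasi-ordering, then the derived recursive path quasi-ordering is a
well-quasi-ordering on ground terms. -/
theorem stmt_9 {F : Type} [Fintype F] (ar : F → ℕ) (ge : F → F → Prop)
    (hrefl : ∀ f, ge f f) (htrans : ∀ f g h, ge f g → ge g h → ge f h)
    (htotal : ∀ f g, ge f g ∨ ge g f)
    (hwqo : ∀ s : ℕ → F, ∃ i j : ℕ, i < j ∧ ge (s j) (s i))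
    (seq : ℕ → GTerm F ar) :
    ∃ i j : ℕ, i < j ∧ RPQO ge (seq j) (seq i) := by
  by_contra hcon
  push_neg at hcon
  have hseqbad : ∀ i j, i < j → ¬ RPQO ge (seq j) (seq i) := fun i j hij =>
    hcon i j hij
  obtain ⟨b, hbbad, hbmin⟩ := exists_min_bad tsize (RPQO ge) seq hseqbad
  have hS : {x : GTerm F ar | ∃ k, x ∈ argsOf (b k)}.PartiallyWellOrderedOn
      (fun a c => RPQO ge c a) := by
    rw [Set.partiallyWellOrderedOn_iff_exists_lt]
    intro v hv
    by_contra hvbad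
    push_neg at hvbad
    choose n hn using hv
    have hne : ∃ m : ℕ, ∃ l, n l = m := ⟨n 0, 0, rfl⟩
    obtain ⟨l₀, hl₀⟩ := Nat.find_spec hne
    set N := Nat.find hne with hNdef
    have hNle : ∀ l, N ≤ n l := fun l => Nat.find_min' hne ⟨l, rfl⟩
    set c : ℕ → GTerm F ar := fun i => if i < N then b i else v (l₀ + (i - N)) with hc
    have hcbad : ∀ i j, i < j → ¬ RPQO ge (c j) (c i) := by
      intro i j hij hR
      by_cases hiN : i < N
      · by_cases hjN : j < N
        · simp only [hc, if_pos hiN, if_pos hjN] at hR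
          exact hbbad i j hij hR
        · simp only [hc, if_pos hiN, if_neg hjN] at hR
          set l := l₀ + (j - N) with hl
          have h1 : RPQO ge (b (n l)) (v l) := RPQO_subterm ge hrefl htotal (hn l)
          have h2 : RPQO ge (b (n l)) (b i) := RPQO_trans' ge htrans htotal h1 hR
          exact hbbad i (n l) (lt_of_lt_of_le hiN (hNle l)) h2
      · have hjN : ¬ j < N := by omega
        simp only [hc, if_neg hiN, if_neg hjN] at hR
        exact hvbad (l₀ + (i - N)) (l₀ + (j - N)) (by omega) hR
    have hmin := hbmin N c hcbad (fun i hi => by simp only [hc, if_pos hi])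
    have hlt : tsize (c N) < tsize (b N) := by
      have hcN : c N = v l₀ := by simp only [hc, if_neg (lt_irrefl N), Nat.sub_self, Nat.add_zero]
      rw [hcN]
      have := tsize_lt_of_mem_argsOf (hn l₀)
      rwa [hl₀] at this
    omega
  obtain ⟨f, hf⟩ := Finite.exists_infinite_fiber (fun k => hd (b k) : ℕ → F)
  have hfib : ((fun k => hd (b k)) ⁻¹' {f} : Set ℕ).Infinite := Set.infinite_coe_iff.mp hf
  have hgt : ∀ m : ℕ, ∃ k, m < k ∧ hd (b k) = f := by
    intro m
    obtain ⟨k, hk, hmk⟩ := hfib.exists_gt m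
    exact ⟨k, hmk, hk⟩
  choose nx hnx1 hnx2 using hgt
  let φ : ℕ → ℕ := fun k => Nat.rec (nx 0) (fun _ p => nx p) k
  have hφmono : StrictMono φ := strictMono_nat_of_lt_succ (fun n => hnx1 (φ n))
  have hφf : ∀ k, hd (b (φ k)) = f := by
    intro k
    cases k with
    | zero => exact hnx2 0
    | succ k => exact hnx2 (φ k)
  haveI : IsRefl (GTerm F ar) (fun a c => RPQO ge c a) := ⟨fun a => RPQO_refl ge hrefl a⟩
  haveI : IsTrans (GTerm F ar) (fun a c => RPQO ge c a) :=
    ⟨fun a bb c h1 h2 => RPQO_trans' ge htrans htotal h2 h1⟩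
  haveI : IsPreorder (GTerm F ar) (fun a c => RPQO ge c a) :=
    { refl := fun a => RPQO_refl ge hrefl a,
      trans := fun a bb c h1 h2 => RPQO_trans' ge htrans htotal h2 h1 }
  have hlist := Set.PartiallyWellOrderedOn.partiallyWellOrderedOn_sublistForall₂
    (fun a c : GTerm F ar => RPQO ge c a) hS
  have hmem : ∀ k : ℕ, (fun k => argsL (b (φ k))) k ∈
      { l : List (GTerm F ar) | ∀ x, x ∈ l → x ∈ {x : GTerm F ar | ∃ k, x ∈ argsOf (b k)} } := by
    intro k x hx
    refine ⟨φ k, ?_⟩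
    rw [argsOf_eq_coe]
    exact Multiset.mem_coe.mpr hx
  obtain ⟨m, n, hmn, hsub⟩ := Set.partiallyWellOrderedOn_iff_exists_lt.mp hlist (fun k => argsL (b (φ k))) hmem
  have hM : MulGE (RPQO ge) (argsOf (b (φ n))) (argsOf (b (φ m))) := by
    rw [argsOf_eq_coe, argsOf_eq_coe]
    exact MulGE.of_sublistForall₂ hsub
  have hfin : RPQO ge (b (φ n)) (b (φ m)) :=
    RPQO_of_hd_eq ge hrefl (by rw [hφf, hφf]) hM
  exact hbbad (φ m) (φ n) (hφmono hmn) hfin
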